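/- Let C be a pure normal simplicial complex of dimension d−1, let S be the vertex set of a facet of C, and let F0 be an ordered facet of C whose ordering is admissible with respect to S. Then there exists a monotone conservative path towards S that starts at F0 and whose last facet is the facet with vertex set S. -/

import Mathlib

/-! Common definitions: pure simplicial complexes (represented by their facet sets),
vertex-distance, links, ordered facets, vectors of distances, admissibility, and
monotone/conservative dual paths, following Adiprasito–Benedetti's combinatorial
segments. -/

open scoped Classical

noncomputable section

namespace MCP

variable {V : Type} [DecidableEq V] [Fintype V]

/-- The vertex set of the complex whose set of facets is `C`. -/
def verts (C : Finset (Finset V)) : Finset V := C.sup id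

/-- `f` is a face of the pure complex with facet set `C`. -/
def IsFace (C : Finset (Finset V)) (f : Finset V) : Prop := ∃ F ∈ C, f ⊆ F

/-- `C` is pure of dimension `d - 1`: every facet has `d` vertices. -/
def Pure (C : Finset (Finset V)) (d : ℕ) : Prop := ∀ F ∈ C, F.card = d

/-- The 1-skeleton of the complex: two vertices are joined iff they lie in a common facet. -/
def skeleton (C : Finset (Finset V)) : SimpleGraph V where
  Adj u v := u ≠ v ∧ ∃ F ∈ C, u ∈ F ∧ v ∈ F
  symm := ⟨by
    rintro u v ⟨h, F, hF, hu, hv⟩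
    exact ⟨h.symm, F, hF, hv, hu⟩⟩
  loopless := ⟨by rintro u ⟨h, -⟩; exact h rfl⟩

/-- Two facets are adjacent in the dual graph iff they differ in a single vertex. -/
def AdjFacets (F G : Finset V) : Prop :=
  F ≠ G ∧ F.card = G.card ∧ (F ∩ G).card + 1 = F.card

/-- A dual path: a list of facets of `C` in which consecutive facets are adjacent. -/
def IsDualPath (C : Finset (Finset V)) (P : List (Finset V)) : Prop :=
  (∀ F ∈ P, F ∈ C) ∧ P.Chain' AdjFacets

/-- `C` is normal: for every face `f`, any two facets containing `f` are joined by a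
dual path all of whose facets contain `f`. -/
def Normal (C : Finset (Finset V)) : Prop :=
  ∀ f : Finset V, ∀ F ∈ C, ∀ G ∈ C, f ⊆ F → f ⊆ G →
    ∃ P : List (Finset V), P.head? = some F ∧ P.getLast? = some G ∧
      (∀ H ∈ P, H ∈ C ∧ f ⊆ H) ∧ P.Chain' AdjFacets

/-- The (facet set of the) link of a vertex `x` in `C`. -/
def link (C : Finset (Finset V)) (x : V) : Finset (Finset V) :=
  (C.filter (fun F => x ∈ F)).image (fun F => F.erase x)

/-- Vertex-distance (in the 1-skeleton) between two sets of vertices, with value `⊤`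
if one of the sets is empty, and with the special `0/1` convention when the complex
is `0`-dimensional. -/
def vdistSets (C : Finset (Finset V)) (S T : Finset V) : ℕ∞ :=
  if C.sup Finset.card ≤ 1 then
    (if S.Nonempty ∧ T.Nonempty then (if (S ∩ T).Nonempty then 0 else 1) else ⊤)
  else ⨅ u ∈ S, ⨅ v ∈ T, (skeleton C).edist u v

/-- The derived target set `S'` in the link of `x`, used in the recursive definitions
of the vector of distances and of admissibility. -/
def targetSet (C : Finset (Finset V)) (x : V) (S : Finset V) : Finset V :=
  if x ∈ S then S ∩ verts (link C x)
  else (verts (link C x)).filter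
    (fun w => vdistSets C {w} S + 1 = vdistSets C {x} S)

/-- The vector of distances from an ordered facet (a list of vertices) to a target set. -/
def distVector : Finset (Finset V) → List V → Finset V → List ℕ∞
  | _, [], _ => []
  | C, x :: rest, S => vdistSets C {x} S :: distVector (link C x) rest (targetSet C x S)

/-- Admissibility of an ordering of a facet with respect to a target set: the first
vertex realizes the vertex-distance from the facet to the target set, and recursively
in the link. -/
def Admissible : Finset (Finset V) → List V → Finset V → Prop
  | _, [], _ => True
  | C, x :: rest, S =>
      vdistSets C {x} S = vdistSets C (x :: rest).toFinset S ∧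
      Admissible (link C x) rest (targetSet C x S)

/-- An ordered facet of `C`: a repetition-free list of vertices forming a facet. -/
def IsOrderedFacet (C : Finset (Finset V)) (L : List V) : Prop :=
  L.Nodup ∧ L.toFinset ∈ C

/-- A dual path of ordered facets. -/
def IsOrderedDualPath (C : Finset (Finset V)) (Γ : List (List V)) : Prop :=
  (∀ L ∈ Γ, IsOrderedFacet C L) ∧
  Γ.Chain' (fun L M => AdjFacets L.toFinset M.toFinset)

/-- A path of ordered facets is monotone towards `S` if its vectors of distances are
strictly lexicographically decreasing. -/
def MonotonePath (C : Finset (Finset V)) (S : Finset V) (Γ : List (List V)) : Prop :=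
  Γ.Chain' (fun L M => List.Lex (· < ·) (distVector C M S) (distVector C L S))

/-- The index of a step: the least position at which the two orderings differ. -/
def stepIndex (L M : List V) : ℕ := sInf {k : ℕ | L[k]? ≠ M[k]?}

/-- The step from `L` to `M` is conservative towards `S`: the removed vertex is the last
vertex of `L`, and `M` is admissibly ordered with maximum index among all admissible
reorderings. -/
def ConservativeStep (C : Finset (Finset V)) (S : Finset V) (L M : List V) : Prop :=
  (∃ x, L.getLast? = some x ∧ L.toFinset \ M.toFinset = {x}) ∧
  Admissible C M S ∧
  ∀ M' : List V, M'.Perm M → Admissible C M' S → stepIndex L M' ≤ stepIndex L M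

/-- A path of ordered facets is conservative towards `S` if its first facet is
admissibly ordered and every step is conservative. -/
def ConservativePath (C : Finset (Finset V)) (S : Finset V) (Γ : List (List V)) : Prop :=
  (∀ L ∈ Γ.head?, Admissible C L S) ∧ Γ.Chain' (ConservativeStep C S)

/-- A monotone conservative dual path of ordered facets towards `S`. -/
def MonoConsPath (C : Finset (Finset V)) (S : Finset V) (Γ : List (List V)) : Prop :=
  IsOrderedDualPath C Γ ∧ MonotonePath C S Γ ∧ ConservativePath C S Γ

/-- The path `Γ` starts at the facet `F`. -/
def StartsAt (Γ : List (List V)) (F : Finset V) : Prop :=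
  ∃ L, Γ.head? = some L ∧ L.toFinset = F

/-- The path `Γ` ends at the facet `F`. -/
def EndsAt (Γ : List (List V)) (F : Finset V) : Prop :=
  ∃ L, Γ.getLast? = some L ∧ L.toFinset = F

/-- `C` is flag: every set of vertices of `C` pairwise joined by edges of `C` is a face. -/
def Flag (C : Finset (Finset V)) : Prop :=
  ∀ T : Finset V, T ⊆ verts C →
    (∀ u ∈ T, ∀ v ∈ T, u ≠ v → (skeleton C).Adj u v) → IsFace C T

/-- A critical clique: a clique of the 1-skeleton that becomes a face after removing a
suitable vertex. -/
def CriticalClique (C : Finset (Finset V)) (T : Finset V) : Prop :=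
  (∀ u ∈ T, ∀ v ∈ T, u ≠ v → (skeleton C).Adj u v) ∧ ∃ v ∈ T, IsFace C (T.erase v)

/-- `C` is `k`-banner: every critical clique with at least `k + 1` vertices is a face. -/
def Banner (C : Finset (Finset V)) (k : ℕ) : Prop :=
  ∀ T : Finset V, CriticalClique C T → k + 1 ≤ T.card → IsFace C T

/-- A pure `(d-1)`-complex is a pseudomanifold (possibly with boundary) if every
`(d-2)`-dimensional face lies in at most two facets. -/
def Pseudomanifold (C : Finset (Finset V)) (d : ℕ) : Prop :=
  ∀ f : Finset V, f.card + 1 = d → IsFace C f → (C.filter (fun F => f ⊆ F)).card ≤ 2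

/-- A pure `(d-1)`-complex is a pseudomanifold without boundary if every
`(d-2)`-dimensional face lies in exactly two facets. -/
def PseudomanifoldNoBoundary (C : Finset (Finset V)) (d : ℕ) : Prop :=
  ∀ f : Finset V, f.card + 1 = d → IsFace C f → (C.filter (fun F => f ⊆ F)).card = 2

/-- The join of two complexes (given by their facet sets, on disjoint vertex sets). -/
def join (C₁ C₂ : Finset (Finset V)) : Finset (Finset V) :=
  (C₁ ×ˢ C₂).image (fun p => p.1 ∪ p.2)

/-- The one-point-suspension of `C` at the vertex `v`; the two new suspension vertices
are `Sum.inr false` and `Sum.inr true`. -/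
def ops (C : Finset (Finset V)) (v : V) : Finset (Finset (V ⊕ Bool)) :=
  ((C.filter (fun F => v ∈ F)).image
      (fun F => ((F.erase v).image Sum.inl) ∪ {Sum.inr false, Sum.inr true}))
  ∪ ((C.filter (fun F => v ∉ F)).image (fun F => (F.image Sum.inl) ∪ {Sum.inr false}))
  ∪ ((C.filter (fun F => v ∉ F)).image (fun F => (F.image Sum.inl) ∪ {Sum.inr true}))

/-- The degree of a vertex in the 1-skeleton of `C`. -/
def degree (C : Finset (Finset V)) (x : V) : ℕ :=
  (Finset.univ.filter fun w => (skeleton C).Adj x w).card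

/-- Vertex-decomposability of a pure complex given by its facet set: either a single
simplex, or there is a vertex whose deletion stays pure of the same dimension and whose
link and deletion are both vertex-decomposable.  (The condition
`∀ F ∈ C, ∃ G ∈ C, x ∉ G ∧ F.erase x ⊆ G` expresses that the deletion of `x` is pure
of the same dimension, so that its facets are the facets of `C` avoiding `x`.) -/
inductive VertexDecomposable : Finset (Finset V) → Prop
  | simplex (F : Finset V) : VertexDecomposable {F}
  | step (C : Finset (Finset V)) (x : V) (hx : x ∈ verts C)
      (hdelpure : ∀ F ∈ C, ∃ G ∈ C, x ∉ G ∧ F.erase x ⊆ G)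
      (hlink : VertexDecomposable (link C x))
      (hdel : VertexDecomposable (C.filter (fun F => x ∉ F))) :
      VertexDecomposable C

/-- The maximum length (number of steps) of a monotone conservative path in `C`, over
all nonempty target sets of vertices of `C`. -/
def maxl (C : Finset (Finset V)) : ℕ :=
  sSup {n : ℕ | ∃ (S : Finset V) (Γ : List (List V)), S.Nonempty ∧ S ⊆ verts C ∧
    MonoConsPath C S Γ ∧ Γ.length = n + 1}

/-- `CombSeg C Γ S x₀`: the dual path `Γ` is a combinatorial segment in `C` from its
first facet to the target set `S`, anchored at `x₀` (Adiprasito–Benedetti). -/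
inductive CombSeg : Finset (Finset V) → List (Finset V) → Finset V → V → Prop
  | intersects (C : Finset (Finset V)) (F S : Finset V) (x₀ : V)
      (hF : F ∈ C) (hx : x₀ ∈ F) (hFS : (F ∩ S).Nonempty) :
      CombSeg C [F] S x₀
  | dimOne (C : Finset (Finset V)) (S : Finset V) (x₀ v : V)
      (hdim : ∀ F ∈ C, F.card = 1)
      (h₁ : {x₀} ∈ C) (h₂ : {v} ∈ C) (hx : x₀ ∉ S) (hv : v ∈ S) :
      CombSeg C [{x₀}, {v}] S x₀
  | step (C : Finset (Finset V)) (F₀ : Finset V) (Γ₁ Γ₂ : List (Finset V))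
      (Fk S : Finset V) (x₀ y x₀' : V) (ℓ : ℕ∞)
      (hdim : ∀ F ∈ C, 2 ≤ F.card)
      (hmem : ∀ F ∈ F₀ :: Γ₁, F ∈ C)
      (hdisj : ∀ F ∈ F₀ :: Γ₁, F ∩ S = ∅)
      (hℓ : vdistSets C F₀ S = ℓ)
      (hbefore : ∀ F ∈ F₀ :: Γ₁, ¬ vdistSets C F S < ℓ)
      (hafter : vdistSets C Fk S < ℓ)
      (hy : y ∈ Fk)
      (hyd : vdistSets C {y} S + 1 = ℓ)
      (hyuniq : ∀ z ∈ Fk, vdistSets C {z} S + 1 = ℓ → z = y)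
      (hx₀ : ∀ F ∈ F₀ :: Γ₁, x₀ ∈ F) (hx₀k : x₀ ∈ Fk)
      (hlink : CombSeg (link C x₀)
          (((F₀ :: Γ₁) ++ [Fk]).map (fun F => F.erase x₀))
          ((verts (link C x₀)).filter (fun w => vdistSets C {w} S + 1 = ℓ)) x₀')
      (htail : CombSeg C (Fk :: Γ₂) S y) :
      CombSeg C (F₀ :: Γ₁ ++ Fk :: Γ₂) S x₀


/-! ### Auxiliary lemmas -/

set_option linter.unusedSectionVars false

section Aux

theorem mem_verts {C : Finset (Finset V)} {v : V} :
    v ∈ verts C ↔ ∃ F ∈ C, v ∈ F := by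
  simp [verts, Finset.mem_sup]

theorem mem_link {C : Finset (Finset V)} {x : V} {G : Finset V} :
    G ∈ link C x ↔ ∃ F ∈ C, x ∈ F ∧ G = F.erase x := by
  simp [link, eq_comm, and_assoc]

theorem link_pure {C : Finset (Finset V)} {x : V} {d : ℕ}
    (h : Pure C d) : Pure (link C x) (d - 1) := by
  intro G hG
  obtain ⟨F, hF, hx, rfl⟩ := mem_link.mp hG
  rw [Finset.card_erase_of_mem hx, h F hF]

theorem insert_mem_of_mem_link {C : Finset (Finset V)} {x : V} {G : Finset V}
    (hG : G ∈ link C x) : insert x G ∈ C ∧ x ∉ G := by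
  obtain ⟨F, hF, hx, rfl⟩ := mem_link.mp hG
  rw [Finset.insert_erase hx]
  exact ⟨hF, Finset.notMem_erase _ _⟩

theorem erase_mem_link {C : Finset (Finset V)} {x : V} {F : Finset V}
    (hF : F ∈ C) (hx : x ∈ F) : F.erase x ∈ link C x :=
  mem_link.mpr ⟨F, hF, hx, rfl⟩

theorem adj_erase {F G : Finset V} {x : V} (h : AdjFacets F G)
    (hxF : x ∈ F) (hxG : x ∈ G) : AdjFacets (F.erase x) (G.erase x) := by
  obtain ⟨hne, hcard, hint⟩ := h
  refine ⟨?_, ?_, ?_⟩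
  · intro he
    apply hne
    have := congrArg (insert x) he
    rwa [Finset.insert_erase hxF, Finset.insert_erase hxG] at this
  · rw [Finset.card_erase_of_mem hxF, Finset.card_erase_of_mem hxG, hcard]
  · rw [Finset.erase_inter, Finset.inter_erase, Finset.erase_idem,
      Finset.card_erase_of_mem (Finset.mem_inter.mpr ⟨hxF, hxG⟩), Finset.card_erase_of_mem hxF]
    have h1 : 1 ≤ (F ∩ G).card := Finset.card_pos.mpr ⟨x, Finset.mem_inter.mpr ⟨hxF, hxG⟩⟩
    omega

theorem chain'_map_erase {x : V} : ∀ P : List (Finset V), (∀ H ∈ P, x ∈ H) →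
    P.Chain' AdjFacets → (P.map (fun H => H.erase x)).Chain' AdjFacets := by
  intro P
  induction P with
  | nil => simp
  | cons a t ih =>
    cases t with
    | nil => intro _ _; exact List.isChain_singleton _
    | cons b u =>
      intro hmem hchain
      simp only [List.Chain', List.isChain_cons_cons] at hchain
      simp only [List.Chain', List.map_cons, List.isChain_cons_cons]
      refine ⟨adj_erase hchain.1 (hmem a (by simp)) (hmem b (by simp)), ?_⟩
      exact ih (fun H hH => hmem H (List.mem_cons_of_mem _ hH)) hchain.2

theorem link_normal {C : Finset (Finset V)} {x : V}
    (h : Normal C) : Normal (link C x) := by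
  intro f F hF G hG hfF hfG
  obtain ⟨F', hF', hxF, rfl⟩ := mem_link.mp hF
  obtain ⟨G', hG', hxG, rfl⟩ := mem_link.mp hG
  obtain ⟨P, hhead, hlast, hmemP, hchain⟩ :=
    h (insert x f) F' hF' G' hG'
      (Finset.insert_subset hxF (hfF.trans (Finset.erase_subset _ _)))
      (Finset.insert_subset hxG (hfG.trans (Finset.erase_subset _ _)))
  refine ⟨P.map (fun H => H.erase x), ?_, ?_, ?_, ?_⟩
  · rw [List.head?_map, hhead]; rfl
  · rw [List.getLast?_map, hlast]; rfl
  · intro H hH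
    obtain ⟨H', hH', rfl⟩ := List.mem_map.mp hH
    obtain ⟨hH'C, hfH'⟩ := hmemP H' hH'
    have hxH : x ∈ H' := hfH' (Finset.mem_insert_self _ _)
    refine ⟨erase_mem_link hH'C hxH, ?_⟩
    intro a ha
    refine Finset.mem_erase.mpr ⟨?_, hfH' (Finset.mem_insert_of_mem ha)⟩
    exact (Finset.mem_erase.mp (hfF ha)).1
  · exact chain'_map_erase P (fun H hH => (hmemP H hH).2 (Finset.mem_insert_self _ _)) hchain

end Aux


section VDist

variable {C : Finset (Finset V)} {S T : Finset V} {x w : V}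

theorem skel_adj_of_facet {F : Finset V} (hF : F ∈ C) (hu : x ∈ F) (hw : w ∈ F)
    (hne : x ≠ w) : (skeleton C).Adj x w := ⟨hne, F, hF, hu, hw⟩

theorem vdistSets_nondeg (hnd : ¬ C.sup Finset.card ≤ 1) :
    vdistSets C T S = ⨅ u ∈ T, ⨅ v ∈ S, (skeleton C).edist u v := if_neg hnd

theorem vdist1_nondeg (hnd : ¬ C.sup Finset.card ≤ 1) :
    vdistSets C {x} S = ⨅ v ∈ S, (skeleton C).edist x v := by
  rw [vdistSets_nondeg hnd]
  simp

theorem vdistSets_empty_right (hS : S = ∅) : vdistSets C T S = ⊤ := by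
  subst hS
  by_cases hnd : C.sup Finset.card ≤ 1
  · rw [vdistSets, if_pos hnd, if_neg]
    rintro ⟨-, h⟩
    exact Finset.not_nonempty_empty h
  · rw [vdistSets_nondeg hnd]
    simp

theorem vdistSets_deg (hnd : C.sup Finset.card ≤ 1) (hS : S.Nonempty) (hT : T.Nonempty) :
    vdistSets C T S = if (T ∩ S).Nonempty then 0 else 1 := by
  rw [vdistSets, if_pos hnd, if_pos ⟨hT, hS⟩]

theorem nondeg_of_facet {F : Finset V} {d : ℕ} (hpure : Pure C d) (hF : F ∈ C) (hd : 2 ≤ d) :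
    ¬ C.sup Finset.card ≤ 1 := by
  intro h
  have := Finset.le_sup (f := Finset.card) hF
  rw [hpure F hF] at this
  omega

theorem exists_vdist_min (hT : T.Nonempty) :
    ∃ u ∈ T, vdistSets C {u} S = vdistSets C T S := by
  by_cases hnd : C.sup Finset.card ≤ 1
  · rcases S.eq_empty_or_nonempty with hS | hS
    · obtain ⟨u, hu⟩ := hT
      exact ⟨u, hu, by rw [vdistSets_empty_right hS, vdistSets_empty_right hS]⟩
    · by_cases hTS : (T ∩ S).Nonempty
      · obtain ⟨u, hu⟩ := hTS
        rw [Finset.mem_inter] at hu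
        refine ⟨u, hu.1, ?_⟩
        rw [vdistSets_deg hnd hS (Finset.singleton_nonempty u), vdistSets_deg hnd hS hT,
          if_pos ⟨u, Finset.mem_inter.mpr ⟨Finset.mem_singleton_self u, hu.2⟩⟩,
          if_pos ⟨u, Finset.mem_inter.mpr ⟨hu.1, hu.2⟩⟩]
      · obtain ⟨u, hu⟩ := hT
        refine ⟨u, hu, ?_⟩
        rw [vdistSets_deg hnd hS (Finset.singleton_nonempty u), vdistSets_deg hnd hS ⟨u, hu⟩,
          if_neg hTS, if_neg]
        rintro ⟨v, hv⟩
        rw [Finset.mem_inter, Finset.mem_singleton] at hv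
        exact hTS ⟨v, Finset.mem_inter.mpr ⟨hv.1 ▸ hu, hv.2⟩⟩
  · obtain ⟨u, hu, heq⟩ := Finset.exists_mem_eq_inf T hT (fun u => vdistSets C {u} S)
    refine ⟨u, hu, ?_⟩
    have hTS : T.inf (fun u => vdistSets C {u} S) = vdistSets C T S := by
      rw [Finset.inf_eq_iInf, vdistSets_nondeg hnd]
      exact iInf_congr fun a => iInf_congr fun _ => vdist1_nondeg hnd
    rw [← heq, hTS]

theorem vdistSets_le_of_mem (hu : x ∈ T) : vdistSets C T S ≤ vdistSets C {x} S := by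
  by_cases hnd : C.sup Finset.card ≤ 1
  · rcases S.eq_empty_or_nonempty with hS | hS
    · rw [vdistSets_empty_right hS, vdistSets_empty_right hS]
    · rw [vdistSets_deg hnd hS (Finset.singleton_nonempty x), vdistSets_deg hnd hS ⟨x, hu⟩]
      by_cases hxS : (({x} : Finset V) ∩ S).Nonempty
      · obtain ⟨v, hv⟩ := hxS
        rw [Finset.mem_inter, Finset.mem_singleton] at hv
        rw [if_pos ⟨v, Finset.mem_inter.mpr ⟨hv.1 ▸ hu, hv.2⟩⟩]
        exact zero_le
      · rw [if_neg hxS]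
        split <;> simp
  · rw [vdistSets_nondeg hnd, vdistSets_nondeg hnd]
    refine le_trans (iInf₂_le x hu) ?_
    simp

theorem vdist1_eq_zero_iff : vdistSets C {x} S = 0 ↔ x ∈ S := by
  by_cases hnd : C.sup Finset.card ≤ 1
  · rcases S.eq_empty_or_nonempty with hS | hS
    · subst hS
      rw [vdistSets_empty_right rfl]
      simp
    · rw [vdistSets_deg hnd hS (Finset.singleton_nonempty x)]
      by_cases hx : x ∈ S
      · rw [if_pos ⟨x, Finset.mem_inter.mpr ⟨Finset.mem_singleton_self x, hx⟩⟩]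
        simp [hx]
      · rw [if_neg]
        · simp [hx]
        · rintro ⟨v, hv⟩
          rw [Finset.mem_inter, Finset.mem_singleton] at hv
          exact hx (hv.1 ▸ hv.2)
  · rw [vdist1_nondeg hnd]
    constructor
    · intro h
      rcases S.eq_empty_or_nonempty with hS | hS
      · subst hS; simp at h
      · obtain ⟨v, hv, heq⟩ := Finset.exists_mem_eq_inf S hS (fun v => (skeleton C).edist x v)
        rw [Finset.inf_eq_iInf] at heq
        rw [heq] at h
        rwa [(SimpleGraph.edist_eq_zero_iff.mp h : x = v)]
    · intro h
      refine le_antisymm (le_trans (iInf₂_le x h) (by simp [SimpleGraph.edist_self])) (zero_le)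

theorem vdist1_le_adj_add_one (hnd : ¬ C.sup Finset.card ≤ 1)
    (hadj : (skeleton C).Adj x w) :
    vdistSets C {x} S ≤ vdistSets C {w} S + 1 := by
  rcases S.eq_empty_or_nonempty with hS | hS
  · rw [vdistSets_empty_right hS, vdistSets_empty_right hS]
    simp
  · obtain ⟨v, hv, heq⟩ := Finset.exists_mem_eq_inf S hS (fun v => (skeleton C).edist w v)
    rw [Finset.inf_eq_iInf] at heq
    rw [vdist1_nondeg hnd, vdist1_nondeg hnd, heq]
    calc ⨅ v ∈ S, (skeleton C).edist x v ≤ (skeleton C).edist x v := iInf₂_le v hv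
    _ ≤ (skeleton C).edist x w + (skeleton C).edist w v := SimpleGraph.edist_triangle
    _ = (skeleton C).edist w v + 1 := by
        rw [SimpleGraph.edist_eq_one_iff_adj.mpr hadj, add_comm]

theorem exists_adj_closer (hnd : ¬ C.sup Finset.card ≤ 1) {n : ℕ}
    (hx : vdistSets C {x} S = (n + 1 : ℕ)) :
    ∃ w, (skeleton C).Adj x w ∧ vdistSets C {w} S = (n : ℕ) := by
  have hS : S.Nonempty := by
    rcases S.eq_empty_or_nonempty with hS | hS
    · rw [vdistSets_empty_right hS] at hx
      exact absurd hx.symm (ENat.coe_ne_top _)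
    · exact hS
  obtain ⟨v, hv, heq⟩ := Finset.exists_mem_eq_inf S hS (fun v => (skeleton C).edist x v)
  rw [Finset.inf_eq_iInf] at heq
  have hx0 := hx
  rw [vdist1_nondeg hnd, heq] at hx
  obtain ⟨p, hp⟩ := SimpleGraph.exists_walk_of_edist_eq_coe hx
  cases p with
  | nil => simp at hp
  | @cons _ y _ hadj q =>
    refine ⟨y, hadj, le_antisymm ?_ ?_⟩
    · rw [vdist1_nondeg hnd]
      refine le_trans (iInf₂_le v hv) ?_
      refine le_trans (SimpleGraph.edist_le q) ?_
      have hq : q.length = n := by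
        simp only [SimpleGraph.Walk.length_cons] at hp
        omega
      exact_mod_cast hq.le
    · have h1 := vdist1_le_adj_add_one (S := S) hnd hadj
      rw [hx0] at h1
      have h2 : (n : ℕ∞) + 1 ≤ vdistSets C {y} S + 1 := by push_cast at h1; exact h1
      exact (WithTop.add_le_add_iff_right (ENat.coe_ne_top 1)).mp h2

end VDist


section Reach

variable {C : Finset (Finset V)} {S T : Finset V} {x w : V} {d : ℕ}

theorem reachable_of_dualpath :
    ∀ (P : List (Finset V)), P.Chain' AdjFacets → (∀ H ∈ P, H ∈ C ∧ 2 ≤ H.card) →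
    ∀ {A B : Finset V}, P.head? = some A → P.getLast? = some B →
    ∀ {u v}, u ∈ A → v ∈ B → (skeleton C).Reachable u v := by
  intro P
  induction P with
  | nil => intro _ _ A B h; simp at h
  | cons A' t ih =>
    intro hchain hmem A B hA hB u v hu hv
    rw [List.head?_cons, Option.some_inj] at hA
    subst hA
    cases t with
    | nil =>
      rw [List.getLast?_singleton, Option.some_inj] at hB
      subst hB
      rcases eq_or_ne u v with rfl | hne
      · exact SimpleGraph.Reachable.refl u
      · exact (skel_adj_of_facet (hmem A' (by simp)).1 hu hv hne).reachable
    | cons Bh t' =>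
      simp only [List.Chain', List.isChain_cons_cons] at hchain
      obtain ⟨hadj, hchain'⟩ := hchain
      have hcard : 1 ≤ (A' ∩ Bh).card := by
        have h2 := (hmem A' (by simp)).2
        have := hadj.2.2
        omega
      obtain ⟨z, hz⟩ := Finset.card_pos.mp hcard
      rw [Finset.mem_inter] at hz
      have r1 : (skeleton C).Reachable u z := by
        rcases eq_or_ne u z with rfl | hne
        · exact SimpleGraph.Reachable.refl u
        · exact (skel_adj_of_facet (hmem A' (by simp)).1 hu hz.1 hne).reachable
      have r2 : (skeleton C).Reachable z v :=
        ih hchain' (fun H hH => hmem H (List.mem_cons_of_mem _ hH)) rfl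
          (by rwa [List.getLast?_cons_cons] at hB) hz.2 hv
      exact r1.trans r2

theorem vdist_ne_top (hn : Normal C) (hpure : Pure C d) (hd : 2 ≤ d)
    (hT : ∃ u ∈ T, u ∈ verts C) (hS : ∃ v ∈ S, v ∈ verts C) :
    vdistSets C T S ≠ ⊤ := by
  obtain ⟨u, hu, huV⟩ := hT
  obtain ⟨v, hv, hvV⟩ := hS
  obtain ⟨Fu, hFu, huF⟩ := mem_verts.mp huV
  obtain ⟨Fv, hFv, hvF⟩ := mem_verts.mp hvV
  obtain ⟨P, hhead, hlast, hmem, hchain⟩ :=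
    hn ∅ Fu hFu Fv hFv (Finset.empty_subset _) (Finset.empty_subset _)
  have hreach : (skeleton C).Reachable u v :=
    reachable_of_dualpath P hchain
      (fun H hH => ⟨(hmem H hH).1, by rw [hpure H (hmem H hH).1]; exact hd⟩)
      hhead hlast huF hvF
  have hnd := nondeg_of_facet hpure hFu hd
  rw [vdistSets_nondeg hnd]
  intro htop
  apply SimpleGraph.edist_ne_top_iff_reachable.mpr hreach
  apply top_le_iff.mp
  rw [← htop]
  exact le_trans (iInf₂_le u hu) (iInf₂_le v hv)

theorem mem_verts_link : w ∈ verts (link C x) ↔ ∃ F ∈ C, x ∈ F ∧ w ∈ F ∧ w ≠ x := by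
  rw [mem_verts]
  constructor
  · rintro ⟨G, hG, hw⟩
    obtain ⟨F, hF, hxF, rfl⟩ := mem_link.mp hG
    rw [Finset.mem_erase] at hw
    exact ⟨F, hF, hxF, hw.2, hw.1⟩
  · rintro ⟨F, hF, hxF, hwF, hne⟩
    exact ⟨F.erase x, erase_mem_link hF hxF, Finset.mem_erase.mpr ⟨hne, hwF⟩⟩

theorem adj_mem_verts_link (hadj : (skeleton C).Adj x w) : w ∈ verts (link C x) := by
  obtain ⟨hne, F, hF, hxF, hwF⟩ := hadj
  exact mem_verts_link.mpr ⟨F, hF, hxF, hwF, hne.symm⟩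

theorem mem_targetSet_of_not_mem (hx : x ∉ S) :
    w ∈ targetSet C x S ↔ w ∈ verts (link C x) ∧
      vdistSets C {w} S + 1 = vdistSets C {x} S := by
  rw [targetSet, if_neg hx, Finset.mem_filter]

theorem targetSet_of_mem (hx : x ∈ S) : targetSet C x S = S ∩ verts (link C x) :=
  if_pos hx

end Reach

section AdmissibleEx

theorem exists_admissible :
    ∀ (n : ℕ) (C : Finset (Finset V)) (T S : Finset V), T.card = n →
    ∃ L : List V, L.Nodup ∧ L.toFinset = T ∧ Admissible C L S := by
  intro n
  induction n with
  | zero =>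
    intro C T S hT
    rw [Finset.card_eq_zero] at hT
    exact ⟨[], List.nodup_nil, by simp [hT], trivial⟩
  | succ n ih =>
    intro C T S hT
    have hTne : T.Nonempty := Finset.card_pos.mp (by omega)
    obtain ⟨u, hu, humin⟩ := exists_vdist_min (C := C) (S := S) hTne
    obtain ⟨L', hnd', htf', hadm'⟩ := ih (link C u) (T.erase u) (targetSet C u S)
      (by rw [Finset.card_erase_of_mem hu, hT]; omega)
    refine ⟨u :: L', ?_, ?_, ?_⟩
    · refine List.nodup_cons.mpr ⟨?_, hnd'⟩
      intro hmem
      have : u ∈ T.erase u := htf' ▸ List.mem_toFinset.mpr hmem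
      exact (Finset.mem_erase.mp this).1 rfl
    · rw [List.toFinset_cons, htf', Finset.insert_erase hu]
    · refine ⟨?_, hadm'⟩
      have : (u :: L').toFinset = T := by
        rw [List.toFinset_cons, htf', Finset.insert_erase hu]
      rw [this, humin]

end AdmissibleEx

section Lex

theorem lex_trans : ∀ {a b c : List ℕ∞}, List.Lex (· < ·) a b → List.Lex (· < ·) b c →
    List.Lex (· < ·) a c := by
  intro a b c h1 h2
  induction h2 generalizing a with
  | nil => cases h1
  | @rel l₁ l₂ x y hxy =>
    cases h1 with
    | nil => exact List.Lex.nil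
    | rel h' => exact List.Lex.rel (lt_trans h' hxy)
    | cons h' => exact List.Lex.rel hxy
  | @cons x l₁ l₂ h ih =>
    cases h1 with
    | nil => exact List.Lex.nil
    | rel h' => exact List.Lex.rel h'
    | cons h' => exact List.Lex.cons (ih h')

theorem lex_irrefl : ∀ (a : List ℕ∞), ¬ List.Lex (· < ·) a a := by
  intro a
  induction a with
  | nil => intro h; cases h
  | cons x t ih =>
    intro h
    cases h with
    | rel h' => exact lt_irrefl _ h'
    | cons h' => exact ih h'

end Lex

section StepIdx

theorem stepIndex_cons {x : V} {A B : List V} (hne : A ≠ B) :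
    stepIndex (x :: A) (x :: B) = stepIndex A B + 1 := by
  have hnonempty : {k : ℕ | A[k]? ≠ B[k]?}.Nonempty := by
    by_contra h
    rw [Set.not_nonempty_iff_eq_empty] at h
    refine hne (List.ext_getElem? fun k => ?_)
    by_contra hk
    have hmem : k ∈ {k : ℕ | A[k]? ≠ B[k]?} := hk
    rw [h] at hmem
    exact hmem
  set m := sInf {k : ℕ | A[k]? ≠ B[k]?} with hm
  have hmmem : A[m]? ≠ B[m]? := Nat.sInf_mem hnonempty
  refine le_antisymm ?_ ?_
  · refine Nat.sInf_le ?_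
    show m + 1 ∈ {k : ℕ | (x :: A)[k]? ≠ (x :: B)[k]?}
    simpa using hmmem
  · refine le_csInf ?_ ?_
    · obtain ⟨k, hk⟩ := hnonempty
      exact ⟨k + 1, by simpa using hk⟩
    · intro k hk
      rw [Set.mem_setOf] at hk
      match k with
      | 0 => simp at hk
      | k + 1 =>
        simp only [List.getElem?_cons_succ] at hk
        exact Nat.succ_le_succ (Nat.sInf_le hk)

theorem stepIndex_zero {A B : List V} (h : A[0]? ≠ B[0]?) : stepIndex A B = 0 :=
  Nat.sInf_eq_zero.mpr (Or.inl h)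

end StepIdx


section MainLemmas

variable {C : Finset (Finset V)} {S T : Finset V} {x w : V} {d : ℕ}

theorem adj_insert {A B : Finset V} {x : V} (h : AdjFacets A B) (hxA : x ∉ A) (hxB : x ∉ B) :
    AdjFacets (insert x A) (insert x B) := by
  obtain ⟨hne, hcard, hint⟩ := h
  have hint2 : insert x A ∩ insert x B = insert x (A ∩ B) := by
    ext y; simp only [Finset.mem_inter, Finset.mem_insert]; tauto
  refine ⟨?_, ?_, ?_⟩
  · intro he
    apply hne
    have := congrArg (fun s => Finset.erase s x) he
    simpa [Finset.erase_insert hxA, Finset.erase_insert hxB] using this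
  · rw [Finset.card_insert_of_notMem hxA, Finset.card_insert_of_notMem hxB, hcard]
  · rw [hint2, Finset.card_insert_of_notMem (fun hx => hxA (Finset.mem_inter.mp hx).1),
      Finset.card_insert_of_notMem hxA]
    omega

theorem exists_mem_inter_of_vdist_eq_zero (hT : T.Nonempty) (h : vdistSets C T S = 0) :
    ∃ u ∈ T, u ∈ S := by
  obtain ⟨u, hu, he⟩ := exists_vdist_min (C := C) (S := S) hT
  exact ⟨u, hu, vdist1_eq_zero_iff.mp (by rw [he, h])⟩

theorem tail_toFinset {x : V} {rest : List V} (h : (x :: rest).Nodup) :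
    rest.toFinset = (x :: rest).toFinset.erase x := by
  have hxr : x ∉ rest.toFinset := fun hx => (List.nodup_cons.mp h).1 (List.mem_toFinset.mp hx)
  rw [List.toFinset_cons, Finset.erase_insert hxr]

theorem far_step : ∀ (d : ℕ) (C : Finset (Finset V)) (S : Finset V) (F : List V),
    Pure C d → Normal C → S ⊆ verts C → F.Nodup → F.toFinset ∈ C → Admissible C F S →
    1 ≤ vdistSets C F.toFinset S → vdistSets C F.toFinset S ≠ ⊤ →
    ∃ M : List V, M.Nodup ∧ M.toFinset ∈ C ∧ AdjFacets F.toFinset M.toFinset ∧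
      ConservativeStep C S F M ∧
      List.Lex (· < ·) (distVector C M S) (distVector C F S) := by
  intro d
  induction d with
  | zero =>
    intro C S F hpure hn hS hnodup hFC hadm h1 htop
    exfalso
    apply htop
    have hcard : F.toFinset = ∅ := Finset.card_eq_zero.mp (hpure _ hFC)
    by_cases hnd : C.sup Finset.card ≤ 1
    · rw [vdistSets, if_pos hnd, if_neg]
      rintro ⟨hT, -⟩
      rw [hcard] at hT
      exact Finset.not_nonempty_empty hT
    · rw [vdistSets_nondeg hnd, hcard]
      simp
  | succ d ihd =>
    intro C S F hpure hn hS hnodup hFC hadm h1 htop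
    have hlen : F.length = d + 1 := by
      rw [← List.toFinset_card_of_nodup hnodup, hpure _ hFC]
    cases F with
    | nil => simp at hlen
    | cons x rest =>
      have hxrest : x ∉ rest.toFinset :=
        fun hx => (List.nodup_cons.mp hnodup).1 (List.mem_toFinset.mp hx)
      cases d with
      | zero =>
        -- one-dimensional case
        have hrest : rest = [] := List.length_eq_zero_iff.mp (by simpa using hlen)
        subst hrest
        have hxtf : ([x] : List V).toFinset = {x} := by simp
        have hSne : S.Nonempty := by
          rcases S.eq_empty_or_nonempty with hS0 | hS0
          · exact absurd (vdistSets_empty_right (C := C) (T := ([x] : List V).toFinset) hS0) htop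
          · exact hS0
        have hxS : x ∉ S := by
          intro hmem
          have h0 : vdistSets C ([x] : List V).toFinset S = 0 := by
            rw [hxtf]
            exact vdist1_eq_zero_iff.mpr hmem
          rw [h0] at h1
          simp at h1
        obtain ⟨w, hwS⟩ := hSne
        obtain ⟨G, hG, hwG⟩ := mem_verts.mp (hS hwS)
        obtain ⟨a, ha⟩ := Finset.card_eq_one.mp (hpure G hG)
        have hGw : G = {w} := by
          rw [ha] at hwG ⊢
          rw [Finset.mem_singleton] at hwG
          rw [hwG]
        have hxw : x ≠ w := fun h => hxS (h ▸ hwS)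
        have hwtf : ([w] : List V).toFinset = {w} := by simp
        refine ⟨[w], List.nodup_singleton w, by rw [hwtf, ← hGw]; exact hG, ?_, ?_, ?_⟩
        · rw [hxtf, hwtf]
          refine ⟨fun h => hxw (by simpa using h), by simp, ?_⟩
          rw [Finset.singleton_inter_of_notMem (by simpa using hxw)]
          simp
        · refine ⟨⟨x, rfl, ?_⟩, ⟨?_, trivial⟩, ?_⟩
          · rw [hxtf, hwtf]
            ext y
            simp only [Finset.mem_sdiff, Finset.mem_singleton]
            constructor
            · rintro ⟨h, -⟩; exact h
            · rintro rfl; exact ⟨rfl, hxw⟩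
          · rw [hwtf]
          · intro M' hperm _
            rw [List.perm_singleton.mp hperm]
        · have h0 : vdistSets C {w} S = 0 := vdist1_eq_zero_iff.mpr hwS
          have h1' : 1 ≤ vdistSets C {x} S := by rwa [hxtf] at h1
          show List.Lex (· < ·)
            (vdistSets C {w} S :: distVector (link C w) [] (targetSet C w S))
            (vdistSets C {x} S :: distVector (link C x) [] (targetSet C x S))
          exact List.Lex.rel (by rw [h0]; exact lt_of_lt_of_le zero_lt_one h1')
      | succ d' =>
        have hd2 : 2 ≤ d' + 1 + 1 := by omega
        have hnd := nondeg_of_facet hpure hFC hd2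
        obtain ⟨hadm1, hadm2⟩ := hadm
        obtain ⟨m, hm⟩ := WithTop.ne_top_iff_exists.mp htop
        obtain ⟨n, rfl⟩ : ∃ n, m = n + 1 := by
          rcases m with - | n
          · exfalso; rw [← hm] at h1; exact absurd h1 (not_le.mpr zero_lt_one)
          · exact ⟨n, rfl⟩
        have hvx : vdistSets C {x} S = ((n + 1 : ℕ) : ℕ∞) := by
          rw [hadm1]
          exact_mod_cast hm.symm
        have hxS : x ∉ S := by
          intro hmem
          rw [vdist1_eq_zero_iff.mpr hmem] at hvx
          have := hvx.symm
          rw [Nat.cast_eq_zero] at this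
          omega
        -- members of the target set are at distance exactly n
        have hwS'' : ∀ w ∈ targetSet C x S, vdistSets C {w} S = (n : ℕ∞) := by
          intro w hw
          obtain ⟨hwv, hw1⟩ := (mem_targetSet_of_not_mem hxS).mp hw
          rw [hvx] at hw1
          have h2 : vdistSets C {w} S + 1 = (n : ℕ∞) + 1 := by
            rw [hw1]; push_cast; ring
          exact WithTop.add_right_cancel (ENat.coe_ne_top 1) h2
        have hS''mem : ∀ w, w ∈ verts (link C x) → vdistSets C {w} S = (n : ℕ∞) →
            w ∈ targetSet C x S := by
          intro w hwv hwd
          exact (mem_targetSet_of_not_mem hxS).mpr ⟨hwv, by rw [hwd, hvx]; push_cast; ring⟩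
        -- the ordered facet is disjoint from the target set
        have hBint : rest.toFinset ∩ targetSet C x S = ∅ := by
          rw [Finset.eq_empty_iff_forall_notMem]
          intro w hw
          rw [Finset.mem_inter] at hw
          have hle : vdistSets C (x :: rest).toFinset S ≤ vdistSets C {w} S :=
            vdistSets_le_of_mem (by rw [List.toFinset_cons]; exact Finset.mem_insert_of_mem hw.1)
          rw [hwS'' w hw.2, ← hadm1, hvx] at hle
          rw [Nat.cast_le] at hle
          omega
        -- target set is nonempty
        obtain ⟨w0, hadj0, hw0⟩ := exists_adj_closer hnd hvx
        have hw0S'' : w0 ∈ targetSet C x S := hS''mem w0 (adj_mem_verts_link hadj0) hw0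
        -- link setup
        have hlpure : Pure (link C x) (d' + 1) := by
          have := link_pure (d := d' + 1 + 1) hpure (x := x)
          simpa using this
        have hlnorm : Normal (link C x) := link_normal hn
        have hxmem : x ∈ (x :: rest).toFinset := by simp
        have hrtf : rest.toFinset = (x :: rest).toFinset.erase x := tail_toFinset hnodup
        have hrl : rest.toFinset ∈ link C x := by rw [hrtf]; exact erase_mem_link hFC hxmem
        have hrnodup : rest.Nodup := (List.nodup_cons.mp hnodup).2
        have hS''sub : targetSet C x S ⊆ verts (link C x) := by
          rw [targetSet, if_neg hxS]; exact Finset.filter_subset _ _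
        have hrestfne : rest.toFinset.Nonempty := by
          apply Finset.card_pos.mp
          rw [hlpure _ hrl]
          omega
        have hld1 : 1 ≤ vdistSets (link C x) rest.toFinset (targetSet C x S) := by
          rw [ENat.one_le_iff_ne_zero]
          intro h0
          obtain ⟨u, hu, huS⟩ := exists_mem_inter_of_vdist_eq_zero hrestfne h0
          have : u ∈ rest.toFinset ∩ targetSet C x S := Finset.mem_inter.mpr ⟨hu, huS⟩
          rw [hBint] at this
          exact absurd this (Finset.notMem_empty u)
        have hltop : vdistSets (link C x) rest.toFinset (targetSet C x S) ≠ ⊤ := by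
          rcases Nat.lt_or_ge d' 1 with hd' | hd'
          · have hdeg : (link C x).sup Finset.card ≤ 1 :=
              Finset.sup_le fun G hG => by rw [hlpure G hG]; omega
            rw [vdistSets_deg hdeg ⟨w0, hw0S''⟩ hrestfne]
            split <;> simp
          · obtain ⟨u, hu⟩ := hrestfne
            exact vdist_ne_top hlnorm hlpure (by omega)
              ⟨u, hu, mem_verts.mpr ⟨rest.toFinset, hrl, hu⟩⟩
              ⟨w0, hw0S'', hS''sub hw0S''⟩
        obtain ⟨M', hM'nodup, hM'link, hM'adj, hM'cons, hM'lex⟩ :=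
          ihd (link C x) (targetSet C x S) rest hlpure hlnorm hS''sub hrnodup hrl hadm2
            hld1 hltop
        obtain ⟨hGC, hxM'⟩ := insert_mem_of_mem_link hM'link
        have hxM'' : x ∉ M' := fun h => hxM' (List.mem_toFinset.mpr h)
        have hadjC : AdjFacets (x :: rest).toFinset (insert x M'.toFinset) := by
          rw [List.toFinset_cons]
          exact adj_insert hM'adj hxrest hxM'
        have hdiff : (x :: rest).toFinset \ insert x M'.toFinset
            = rest.toFinset \ M'.toFinset := by
          ext y
          simp only [List.toFinset_cons, Finset.mem_sdiff, Finset.mem_insert]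
          have hyx : y ∈ rest.toFinset → y ≠ x := fun hy hyx => hxrest (hyx ▸ hy)
          constructor
          · rintro ⟨h1 | h1, h2⟩
            · exact absurd (Or.inl h1) h2
            · exact ⟨h1, fun hM => h2 (Or.inr hM)⟩
          · rintro ⟨h1, h2⟩
            exact ⟨Or.inr h1, fun h => by
              rcases h with h | h
              · exact hyx h1 h
              · exact h2 h⟩
        obtain ⟨y, hy1, hy2⟩ := hM'cons.1
        have hlast : (x :: rest).getLast? = some y := by
          cases rest with
          | nil => simp at hy1
          | cons a t => rw [List.getLast?_cons_cons]; exact hy1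
        have hrM'ne : rest.toFinset ≠ M'.toFinset := by
          intro h
          rw [h, Finset.sdiff_self] at hy2
          exact (Finset.singleton_ne_empty y) hy2.symm
        by_cases hcase : (M'.toFinset ∩ targetSet C x S).Nonempty
        · -- the new facet meets the target set: reorder admissibly
          obtain ⟨w1, hw1⟩ := hcase
          rw [Finset.mem_inter] at hw1
          have hvGle : vdistSets C (insert x M'.toFinset) S ≤ (n : ℕ∞) := by
            rw [← hwS'' w1 hw1.2]
            exact vdistSets_le_of_mem (Finset.mem_insert_of_mem hw1.1)
          have hxM'nodup : (x :: M').Nodup := List.nodup_cons.mpr ⟨hxM'', hM'nodup⟩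
          have hGtf : (x :: M').toFinset = insert x M'.toFinset := List.toFinset_cons
          obtain ⟨L₀, hL₀nodup, hL₀tf, hL₀adm⟩ :=
            exists_admissible (d' + 1 + 1) C (insert x M'.toFinset) S (hpure _ hGC)
          have hL₀perm : L₀.Perm (x :: M') :=
            List.perm_of_nodup_nodup_toFinset_eq hL₀nodup hxM'nodup (by rw [hL₀tf, hGtf])
          set cands : Finset (List V) :=
            (x :: M').permutations.toFinset.filter (fun L => Admissible C L S) with hcands
          have hL₀mem : L₀ ∈ cands := Finset.mem_filter.mpr
            ⟨List.mem_toFinset.mpr (List.mem_permutations.mpr hL₀perm), hL₀adm⟩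
          obtain ⟨M, hMmem, hMsup⟩ :=
            Finset.exists_mem_eq_sup cands ⟨L₀, hL₀mem⟩ (fun L => stepIndex (x :: rest) L)
          have hMperm : M.Perm (x :: M') :=
            List.mem_permutations.mp (List.mem_toFinset.mp (Finset.mem_filter.mp hMmem).1)
          have hMadm : Admissible C M S := (Finset.mem_filter.mp hMmem).2
          have hMtf : M.toFinset = insert x M'.toFinset := by
            rw [List.toFinset_eq_of_perm _ _ hMperm, hGtf]
          have hMnodup : M.Nodup := hMperm.nodup_iff.mpr hxM'nodup
          refine ⟨M, hMnodup, by rw [hMtf]; exact hGC, by rw [hMtf]; exact hadjC, ?_, ?_⟩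
          · refine ⟨⟨y, hlast, by rw [hMtf, hdiff]; exact hy2⟩, hMadm, ?_⟩
            intro M₂ hperm₂ hadm₂
            have hM₂mem : M₂ ∈ cands := Finset.mem_filter.mpr
              ⟨List.mem_toFinset.mpr (List.mem_permutations.mpr (hperm₂.trans hMperm)), hadm₂⟩
            rw [← hMsup]
            exact Finset.le_sup (f := fun L => stepIndex (x :: rest) L) hM₂mem
          · cases M with
            | nil =>
              have := hMperm.length_eq
              simp at this
            | cons h t =>
              obtain ⟨hadmh, -⟩ := hMadm
              have hhd : vdistSets C {h} S < vdistSets C {x} S := by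
                rw [hadmh, hMtf, hvx]
                exact lt_of_le_of_lt hvGle (by exact_mod_cast Nat.lt_succ_self n)
              show List.Lex (· < ·)
                (vdistSets C {h} S :: distVector (link C h) t (targetSet C h S))
                (vdistSets C {x} S :: distVector (link C x) rest (targetSet C x S))
              exact List.Lex.rel hhd
        · -- the new facet stays at the same distance : keep x first
          rw [Finset.not_nonempty_iff_eq_empty] at hcase
          have hvG : vdistSets C (insert x M'.toFinset) S = vdistSets C {x} S := by
            refine le_antisymm (vdistSets_le_of_mem (Finset.mem_insert_self x _)) ?_
            obtain ⟨u, hu, humin⟩ :=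
              exists_vdist_min (C := C) (S := S) (T := insert x M'.toFinset)
                ⟨x, Finset.mem_insert_self x _⟩
            rw [← humin]
            rcases Finset.mem_insert.mp hu with rfl | huM
            · exact le_rfl
            · have hneq : u ≠ x := fun h => hxM' (h ▸ huM)
              have hadjxu : (skeleton C).Adj x u :=
                skel_adj_of_facet hGC (Finset.mem_insert_self x _)
                  (Finset.mem_insert_of_mem huM) hneq.symm
              have htri := vdist1_le_adj_add_one (S := S) hnd hadjxu
              have huv : u ∈ verts (link C x) := adj_mem_verts_link hadjxu
              have hunot : u ∉ targetSet C x S := by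
                intro hu''
                have : u ∈ M'.toFinset ∩ targetSet C x S := Finset.mem_inter.mpr ⟨huM, hu''⟩
                rw [hcase] at this
                exact absurd this (Finset.notMem_empty u)
              have hne_n : vdistSets C {u} S ≠ (n : ℕ∞) :=
                fun he => hunot (hS''mem u huv he)
              have hge_n : (n : ℕ∞) ≤ vdistSets C {u} S := by
                rw [hvx] at htri
                have h3 : (n : ℕ∞) + 1 ≤ vdistSets C {u} S + 1 := by
                  push_cast at htri; exact htri
                exact (WithTop.add_le_add_iff_right (ENat.coe_ne_top 1)).mp h3
              have hlt : (n : ℕ∞) < vdistSets C {u} S := lt_of_le_of_ne hge_n (Ne.symm hne_n)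
              have h4 := Order.add_one_le_of_lt hlt
              rw [hvx]
              push_cast
              exact h4
          have hMtf : (x :: M').toFinset = insert x M'.toFinset := List.toFinset_cons
          have hadmM : Admissible C (x :: M') S := by
            refine ⟨?_, hM'cons.2.1⟩
            rw [hMtf, hvG]
          refine ⟨x :: M', List.nodup_cons.mpr ⟨hxM'', hM'nodup⟩,
            by rw [hMtf]; exact hGC, by rw [hMtf]; exact hadjC, ?_, ?_⟩
          · refine ⟨⟨y, hlast, by rw [hMtf, hdiff]; exact hy2⟩, hadmM, ?_⟩
            intro M₂ hperm₂ hadm₂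
            cases M₂ with
            | nil =>
              have := hperm₂.length_eq
              simp at this
            | cons h2 t2 =>
              by_cases hh : h2 = x
              · subst hh
                have ht2 : t2.Perm M' := hperm₂.cons_inv
                have ht2f : t2.toFinset = M'.toFinset := List.toFinset_eq_of_perm _ _ ht2
                have hmax := hM'cons.2.2 t2 ht2 hadm₂.2
                have hrt2 : rest ≠ t2 := fun h => hrM'ne (by rw [h, ht2f])
                have hrM'l : rest ≠ M' := fun h => hrM'ne (by rw [h])
                rw [stepIndex_cons hrt2, stepIndex_cons hrM'l]
                omega
              · rw [stepIndex_zero (A := x :: rest) (B := h2 :: t2)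
                  (by simp only [List.getElem?_cons_zero]
                      exact fun h => hh (Option.some_inj.mp h).symm)]
                exact Nat.zero_le _
          · show List.Lex (· < ·)
              (vdistSets C {x} S :: distVector (link C x) M' (targetSet C x S))
              (vdistSets C {x} S :: distVector (link C x) rest (targetSet C x S))
            exact List.Lex.cons hM'lex

theorem facet_step : ∀ (d : ℕ) (C : Finset (Finset V)) (S : Finset V) (F : List V),
    Pure C d → Normal C → S ∈ C → F.Nodup → F.toFinset ∈ C → Admissible C F S →
    F.toFinset ≠ S →
    ∃ M : List V, M.Nodup ∧ M.toFinset ∈ C ∧ AdjFacets F.toFinset M.toFinset ∧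
      ConservativeStep C S F M ∧
      List.Lex (· < ·) (distVector C M S) (distVector C F S) := by
  intro d
  induction d with
  | zero =>
    intro C S F hpure hn hSC hnodup hFC hadm hne
    exact absurd ((Finset.card_eq_zero.mp (hpure _ hFC)).trans
      (Finset.card_eq_zero.mp (hpure _ hSC)).symm) hne
  | succ d ihd =>
    intro C S F hpure hn hSC hnodup hFC hadm hne
    have hSsub : S ⊆ verts C := fun v hv => mem_verts.mpr ⟨S, hSC, hv⟩
    have hSne : S.Nonempty := Finset.card_pos.mp (by rw [hpure _ hSC]; omega)
    have hFne : F.toFinset.Nonempty := Finset.card_pos.mp (by rw [hpure _ hFC]; omega)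
    have hlen : F.length = d + 1 := by
      rw [← List.toFinset_card_of_nodup hnodup, hpure _ hFC]
    by_cases hfar : 1 ≤ vdistSets C F.toFinset S
    · have htop : vdistSets C F.toFinset S ≠ ⊤ := by
        by_cases hnd : C.sup Finset.card ≤ 1
        · rw [vdistSets_deg hnd hSne hFne]
          split <;> simp
        · have hd2 : 2 ≤ d + 1 := by
            by_contra hd'
            have hd0 : d = 0 := by omega
            apply hnd
            exact Finset.sup_le fun G hG => by rw [hpure G hG, hd0]
          obtain ⟨u, hu⟩ := hFne
          obtain ⟨v, hv⟩ := hSne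
          exact vdist_ne_top hn hpure hd2 ⟨u, hu, mem_verts.mpr ⟨F.toFinset, hFC, hu⟩⟩
            ⟨v, hv, hSsub hv⟩
      exact far_step (d + 1) C S F hpure hn hSsub hnodup hFC hadm hfar htop
    · -- near case
      push_neg at hfar
      have h0 : vdistSets C F.toFinset S = 0 := ENat.lt_one_iff_eq_zero.mp hfar
      cases F with
      | nil => simp at hlen
      | cons x rest =>
        have hxrest : x ∉ rest.toFinset :=
          fun hx => (List.nodup_cons.mp hnodup).1 (List.mem_toFinset.mp hx)
        obtain ⟨hadm1, hadm2⟩ := hadm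
        have hx0 : vdistSets C {x} S = 0 := hadm1.trans h0
        have hxS : x ∈ S := vdist1_eq_zero_iff.mp hx0
        cases d with
        | zero =>
          exfalso
          obtain ⟨a, ha⟩ := Finset.card_eq_one.mp (hpure S hSC)
          have hax : S = {x} := by
            rw [ha] at hxS ⊢
            rw [Finset.mem_singleton] at hxS
            rw [hxS]
          have hrest : rest = [] := List.length_eq_zero_iff.mp (by simpa using hlen)
          subst hrest
          apply hne
          rw [hax]
          simp
        | succ d' =>
          -- target set in the link is the facet S.erase x
          have claimT : targetSet C x S = S.erase x := by
            rw [targetSet_of_mem hxS]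
            ext y
            rw [Finset.mem_inter, Finset.mem_erase]
            constructor
            · rintro ⟨hyS, hyv⟩
              obtain ⟨-, -, -, -, hyx⟩ := mem_verts_link.mp hyv
              exact ⟨hyx, hyS⟩
            · rintro ⟨hyx, hyS⟩
              exact ⟨hyS, mem_verts.mpr ⟨S.erase x, erase_mem_link hSC hxS,
                Finset.mem_erase.mpr ⟨hyx, hyS⟩⟩⟩
          have hS'link : S.erase x ∈ link C x := erase_mem_link hSC hxS
          have hlpure : Pure (link C x) (d' + 1) := by
            have := link_pure (d := d' + 1 + 1) hpure (x := x)
            simpa using this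
          have hlnorm : Normal (link C x) := link_normal hn
          have hxmem : x ∈ (x :: rest).toFinset := by simp
          have hrtf : rest.toFinset = (x :: rest).toFinset.erase x := tail_toFinset hnodup
          have hrl : rest.toFinset ∈ link C x := by rw [hrtf]; exact erase_mem_link hFC hxmem
          have hrnodup : rest.Nodup := (List.nodup_cons.mp hnodup).2
          have hrne : rest.toFinset ≠ S.erase x := by
            intro h
            apply hne
            rw [List.toFinset_cons, h, Finset.insert_erase hxS]
          have hadm2' : Admissible (link C x) rest (S.erase x) := by
            rw [← claimT]; exact hadm2
          obtain ⟨M', hM'nodup, hM'link, hM'adj, hM'cons, hM'lex⟩ :=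
            ihd (link C x) (S.erase x) rest hlpure hlnorm hS'link hrnodup hrl hadm2' hrne
          obtain ⟨hGC, hxM'⟩ := insert_mem_of_mem_link hM'link
          have hxM'' : x ∉ M' := fun h => hxM' (List.mem_toFinset.mpr h)
          have hadjC : AdjFacets (x :: rest).toFinset (insert x M'.toFinset) := by
            rw [List.toFinset_cons]
            exact adj_insert hM'adj hxrest hxM'
          have hdiff : (x :: rest).toFinset \ insert x M'.toFinset
              = rest.toFinset \ M'.toFinset := by
            ext y
            simp only [List.toFinset_cons, Finset.mem_sdiff, Finset.mem_insert]
            have hyx : y ∈ rest.toFinset → y ≠ x := fun hy hyx => hxrest (hyx ▸ hy)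
            constructor
            · rintro ⟨h1 | h1, h2⟩
              · exact absurd (Or.inl h1) h2
              · exact ⟨h1, fun hM => h2 (Or.inr hM)⟩
            · rintro ⟨h1, h2⟩
              exact ⟨Or.inr h1, fun h => by
                rcases h with h | h
                · exact hyx h1 h
                · exact h2 h⟩
          obtain ⟨y, hy1, hy2⟩ := hM'cons.1
          have hlast : (x :: rest).getLast? = some y := by
            cases rest with
            | nil => simp at hy1
            | cons a t => rw [List.getLast?_cons_cons]; exact hy1
          have hrM'ne : rest.toFinset ≠ M'.toFinset := by
            intro h
            rw [h, Finset.sdiff_self] at hy2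
            exact (Finset.singleton_ne_empty y) hy2.symm
          have hMtf : (x :: M').toFinset = insert x M'.toFinset := List.toFinset_cons
          have hvG : vdistSets C (insert x M'.toFinset) S = vdistSets C {x} S := by
            rw [hx0]
            refine le_antisymm ?_ (zero_le)
            rw [← hx0]
            exact vdistSets_le_of_mem (Finset.mem_insert_self x _)
          have hadmM : Admissible C (x :: M') S := by
            refine ⟨?_, ?_⟩
            · rw [hMtf, hvG]
            · rw [claimT]; exact hM'cons.2.1
          refine ⟨x :: M', List.nodup_cons.mpr ⟨hxM'', hM'nodup⟩,
            by rw [hMtf]; exact hGC, by rw [hMtf]; exact hadjC, ?_, ?_⟩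
          · refine ⟨⟨y, hlast, by rw [hMtf, hdiff]; exact hy2⟩, hadmM, ?_⟩
            intro M₂ hperm₂ hadm₂
            cases M₂ with
            | nil =>
              have := hperm₂.length_eq
              simp at this
            | cons h2 t2 =>
              by_cases hh : x = h2
              · subst hh
                have ht2 : t2.Perm M' := hperm₂.cons_inv
                have ht2f : t2.toFinset = M'.toFinset := List.toFinset_eq_of_perm _ _ ht2
                have hadm₂' : Admissible (link C x) t2 (S.erase x) := by
                  rw [← claimT]; exact hadm₂.2
                have hmax := hM'cons.2.2 t2 ht2 hadm₂'
                have hrt2 : rest ≠ t2 := fun h => hrM'ne (by rw [h, ht2f])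
                have hrM'l : rest ≠ M' := fun h => hrM'ne (by rw [h])
                rw [stepIndex_cons hrt2, stepIndex_cons hrM'l]
                omega
              · rw [stepIndex_zero (A := x :: rest) (B := h2 :: t2)
                  (by simp only [List.getElem?_cons_zero]
                      exact fun h => hh (Option.some_inj.mp h))]
                exact Nat.zero_le _
          · show List.Lex (· < ·)
              (vdistSets C {x} S :: distVector (link C x) M' (targetSet C x S))
              (vdistSets C {x} S :: distVector (link C x) rest (targetSet C x S))
            rw [claimT]
            exact List.Lex.cons hM'lex

end MainLemmas

end MCP

open MCP in
/-- in a pure normal complex, if the target set `S` is the vertex set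
of a facet, then from any admissibly ordered facet there is a monotone conservative
path towards `S` whose last facet is `S` itself. -/
theorem statement2 {V : Type} [DecidableEq V] [Fintype V] (d : ℕ)
    (C : Finset (Finset V)) (hpure : Pure C d) (hnormal : Normal C)
    (S : Finset V) (hSC : S ∈ C)
    (F₀ : List V) (hF₀ : IsOrderedFacet C F₀) (hadm : Admissible C F₀ S) :
    ∃ Γ : List (List V), MonoConsPath C S Γ ∧ Γ.head? = some F₀ ∧ EndsAt Γ S := by
  classical
  set allL : Finset (List V) := C.biUnion (fun G => G.toList.permutations.toFinset) with hallL
  have hmemAll : ∀ M : List V, M.Nodup → M.toFinset ∈ C → M ∈ allL := by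
    intro M hnd hMC
    refine Finset.mem_biUnion.mpr ⟨M.toFinset, hMC, List.mem_toFinset.mpr ?_⟩
    exact List.mem_permutations.mpr
      (List.perm_of_nodup_nodup_toFinset_eq hnd (Finset.nodup_toList _)
        (by rw [Finset.toList_toFinset]))
  have main : ∀ (N : ℕ) (F : List V), F.Nodup → F.toFinset ∈ C → Admissible C F S →
      (allL.filter (fun M => List.Lex (· < ·) (distVector C M S) (distVector C F S))).card ≤ N →
      ∃ Γ : List (List V), MonoConsPath C S Γ ∧ Γ.head? = some F ∧ EndsAt Γ S := by
    intro N
    induction N with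
    | zero =>
      intro F hnodup hFC hadmF hcard
      by_cases hFS : F.toFinset = S
      · refine ⟨[F], ⟨⟨?_, List.isChain_singleton _⟩, List.isChain_singleton _,
          ⟨?_, List.isChain_singleton _⟩⟩, rfl, ⟨F, List.getLast?_singleton, hFS⟩⟩
        · intro L hL
          rw [List.mem_singleton] at hL
          subst hL
          exact ⟨hnodup, hFC⟩
        · intro L hL
          rw [List.head?_cons, Option.mem_some_iff] at hL
          exact hL ▸ hadmF
      · exfalso
        obtain ⟨M, hMnodup, hMC, -, -, hMlex⟩ :=
          facet_step d C S F hpure hnormal hSC hnodup hFC hadmF hFS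
        have : M ∈ allL.filter
            (fun M => List.Lex (· < ·) (distVector C M S) (distVector C F S)) :=
          Finset.mem_filter.mpr ⟨hmemAll M hMnodup hMC, hMlex⟩
        have := Finset.card_pos.mpr ⟨M, this⟩
        omega
    | succ N ih =>
      intro F hnodup hFC hadmF hcard
      by_cases hFS : F.toFinset = S
      · refine ⟨[F], ⟨⟨?_, List.isChain_singleton _⟩, List.isChain_singleton _,
          ⟨?_, List.isChain_singleton _⟩⟩, rfl, ⟨F, List.getLast?_singleton, hFS⟩⟩
        · intro L hL
          rw [List.mem_singleton] at hL
          subst hL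
          exact ⟨hnodup, hFC⟩
        · intro L hL
          rw [List.head?_cons, Option.mem_some_iff] at hL
          exact hL ▸ hadmF
      · obtain ⟨M, hMnodup, hMC, hMadj, hMcons, hMlex⟩ :=
          facet_step d C S F hpure hnormal hSC hnodup hFC hadmF hFS
        have hMadm : Admissible C M S := hMcons.2.1
        have hMF : M ∈ allL.filter
            (fun M => List.Lex (· < ·) (distVector C M S) (distVector C F S)) :=
          Finset.mem_filter.mpr ⟨hmemAll M hMnodup hMC, hMlex⟩
        have hboundM : (allL.filter
            (fun L => List.Lex (· < ·) (distVector C L S) (distVector C M S))).card ≤ N := by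
          have hsub : allL.filter
              (fun L => List.Lex (· < ·) (distVector C L S) (distVector C M S)) ⊆
              (allL.filter
                (fun L => List.Lex (· < ·) (distVector C L S) (distVector C F S))).erase M := by
            intro L hL
            rw [Finset.mem_filter] at hL
            refine Finset.mem_erase.mpr ⟨?_, Finset.mem_filter.mpr
              ⟨hL.1, lex_trans hL.2 hMlex⟩⟩
            intro hLM
            subst hLM
            exact lex_irrefl _ hL.2
          have h1 := Finset.card_le_card hsub
          rw [Finset.card_erase_of_mem hMF] at h1
          have h2 := Finset.card_pos.mpr ⟨M, hMF⟩
          omega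
        obtain ⟨Γ', hmcp', hhead', hends'⟩ := ih M hMnodup hMC hMadm hboundM
        cases Γ' with
        | nil => simp at hhead'
        | cons L t =>
          rw [List.head?_cons, Option.some_inj] at hhead'
          subst hhead'
          obtain ⟨⟨hmem', hchain'⟩, hmono', hheadadm', hconschain'⟩ := hmcp'
          obtain ⟨Lend, hLend1, hLend2⟩ := hends'
          refine ⟨F :: L :: t, ⟨⟨?_, ?_⟩, ?_, ⟨?_, ?_⟩⟩, rfl,
            ⟨Lend, by rw [List.getLast?_cons_cons]; exact hLend1, hLend2⟩⟩
          · intro L hL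
            rcases List.mem_cons.mp hL with rfl | hL
            · exact ⟨hnodup, hFC⟩
            · exact hmem' L hL
          · exact List.isChain_cons_cons.mpr ⟨hMadj, hchain'⟩
          · exact List.isChain_cons_cons.mpr ⟨hMlex, hmono'⟩
          · intro L hL
            rw [List.head?_cons, Option.mem_some_iff] at hL
            exact hL ▸ hadmF
          · exact List.isChain_cons_cons.mpr ⟨hMcons, hconschain'⟩
  exact main (allL.filter
      (fun M => List.Lex (· < ·) (distVector C M S) (distVector C F₀ S))).card
    F₀ hF₀.1 hF₀.2 hadm le_rfl
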